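/- Let 0 < q < 1, w ≥ 1, and for i = 1,…,w let k_i, n_i ∈ ℕ with k_i ≥ 1, and x_i ∈ [0,1). Then B_{k₁,…,k_w; n₁,…,n_w}(x₁,…,x_w; q) = ∏_{i=1}^{w} ( ((n_i − k_i + 1)/k_i) · ([x_i]_q / [1−x_i]_q) ) · B_{k₁−1,…,k_w−1; n₁,…,n_w}(x₁,…,x_w; q), where n_i − k_i + 1 is computed in ℤ and then cast to ℝ. -/

import Mathlib

open Finset

/-- The `q`-number `[x]_q = (1 - q^x)/(1 - q)` (real exponent). -/
noncomputable def qnum (q x : ℝ) : ℝ := (1 - q ^ x) / (1 - q)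

/-- The modified `q`-Bernstein polynomial
`B_{k,n}(x;q) = C(n,k) [x]_q^k [1-x]_q^(n-k)`. -/
noncomputable def qBern (q : ℝ) (k n : ℕ) (x : ℝ) : ℝ :=
  (n.choose k : ℝ) * qnum q x ^ k * qnum q (1 - x) ^ (n - k)

lemma qnum_pos (q : ℝ) (hq0 : 0 < q) (hq1 : q < 1) {y : ℝ} (hy : 0 < y) :
    0 < qnum q y := by
  have h : q ^ y < 1 := Real.rpow_lt_one hq0.le hq1 hy
  unfold qnum
  have hq : 0 < 1 - q := by linarith
  exact div_pos (by linarith) hq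

lemma qBern_key (q : ℝ) (hq0 : 0 < q) (hq1 : q < 1) (k n : ℕ) (hk : 1 ≤ k)
    (x : ℝ) (hx : x < 1) :
    qBern q k n x =
      (((n : ℤ) - (k : ℤ) + 1 : ℤ) : ℝ) / (k : ℝ) *
        (qnum q x / qnum q (1 - x)) * qBern q (k - 1) n x := by
  obtain ⟨m, rfl⟩ : ∃ m, k = m + 1 := ⟨k - 1, (Nat.succ_pred_eq_of_pos hk).symm⟩
  have hY : 0 < qnum q (1 - x) := qnum_pos q hq0 hq1 (by linarith)
  have hk1 : ((m : ℝ) + 1) ≠ 0 := by positivity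
  simp only [Nat.add_sub_cancel]
  rcases le_or_gt (m + 1) n with h | h
  · -- m + 1 ≤ n
    have hmn : m < n := h
    have hch : (n.choose (m + 1) : ℝ) * (m + 1) = (n.choose m : ℝ) * ((n : ℝ) - m) := by
      have h2 : ((n.choose (m+1) * (m+1) : ℕ) : ℝ) = ((n.choose m * (n - m) : ℕ) : ℝ) := by
        rw [Nat.choose_succ_right_eq n m]
      push_cast [Nat.cast_sub hmn.le] at h2
      linarith
    have hsub : n - (m + 1) + 1 = n - m := by omega
    have hint : (((n : ℤ) - (m + 1 : ℕ) + 1 : ℤ) : ℝ) = (n : ℝ) - m := by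
      push_cast; ring
    unfold qBern
    rw [hint, ← hsub, pow_succ, pow_succ]
    field_simp
    push_cast
    linear_combination (qnum q x ^ m * qnum q x) * hch
  · -- m + 1 > n, i.e. n ≤ m
    have hn : n ≤ m := by omega
    rcases eq_or_lt_of_le hn with rfl | hlt
    · unfold qBern
      have : n.choose (n + 1) = 0 := Nat.choose_eq_zero_of_lt (by omega)
      have hc : (((n : ℤ) - (n + 1 : ℕ) + 1 : ℤ) : ℝ) = 0 := by push_cast; ring
      rw [this, hc]
      simp
    · unfold qBern
      rw [Nat.choose_eq_zero_of_lt (by omega), Nat.choose_eq_zero_of_lt (by omega)]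
      simp

/-- The modified `q`-Bernstein polynomials of several variables as a multiple
of the polynomials with lowered indices:
`B_{k;n}(x;q) = ∏ᵢ ((nᵢ−kᵢ+1)/kᵢ)·([xᵢ]_q/[1−xᵢ]_q) · B_{k−1;n}(x;q)`. -/
theorem modified_qBernstein_lower_index
    (q : ℝ) (hq0 : 0 < q) (hq1 : q < 1)
    (w : ℕ) (hw : 1 ≤ w) (k n : Fin w → ℕ) (hk : ∀ i, 1 ≤ k i)
    (x : Fin w → ℝ) (hx : ∀ i, x i ∈ Set.Ico (0 : ℝ) 1) :
    ∏ i, qBern q (k i) (n i) (x i) =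
      (∏ i, (((n i : ℤ) - (k i : ℤ) + 1 : ℤ) : ℝ) / (k i : ℝ) *
        (qnum q (x i) / qnum q (1 - x i))) *
      ∏ i, qBern q (k i - 1) (n i) (x i) := by
  rw [← Finset.prod_mul_distrib]
  exact Finset.prod_congr rfl fun i _ =>
    qBern_key q hq0 hq1 (k i) (n i) (hk i) (x i) (hx i).2
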